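/- arXiv:1812.11819 — 2 statements merged into one kernel-verified Lean document; each statement's English description precedes it below -/
import Mathlib

section
/- Let S be a linear contraction on a Banach space B. Then for every x in B and every natural number n, ‖e^{n(S−I)}x − Sⁿx‖ ≤ √n · ‖Sx − x‖, where e^{n(S−I)} = e^{−n} ∑_{k≥0} nᵏSᵏ/k!. -/
open Filter Topology

-- Poisson-type series lemmas
lemma cher_s0 (a : ℝ) : Summable (fun k : ℕ => a ^ k / (Nat.factorial k : ℝ)) :=
  Real.summable_pow_div_factorial a

lemma cher_t0 (a : ℝ) : ∑' k : ℕ, a ^ k / (Nat.factorial k : ℝ) = Real.exp a := by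
  rw [Real.exp_eq_exp_ℝ, NormedSpace.exp_eq_tsum_div]

lemma cher_g1_succ (a : ℝ) (k : ℕ) :
    ((k + 1 : ℕ) : ℝ) * a ^ (k + 1) / (Nat.factorial (k+1) : ℝ) = a * (a ^ k / (Nat.factorial k : ℝ)) := by
  rw [Nat.factorial_succ]
  push_cast
  have h : ((k : ℝ) + 1) ≠ 0 := by positivity
  field_simp
  ring

lemma cher_s1 (a : ℝ) : Summable (fun k : ℕ => (k : ℝ) * a ^ k / (Nat.factorial k : ℝ)) := by
  rw [← summable_nat_add_iff 1]
  simpa only [cher_g1_succ] using (cher_s0 a).mul_left a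

lemma cher_t1 (a : ℝ) : ∑' k : ℕ, (k : ℝ) * a ^ k / (Nat.factorial k : ℝ) = a * Real.exp a := by
  rw [Summable.tsum_eq_zero_add (cher_s1 a)]
  simp only [cher_g1_succ, Nat.cast_zero, zero_mul, zero_div, zero_add]
  rw [tsum_mul_left, cher_t0]

lemma cher_g2_succ (a : ℝ) (k : ℕ) :
    ((k + 2 : ℕ) : ℝ) * (((k + 2 : ℕ) : ℝ) - 1) * a ^ (k + 2) / (Nat.factorial (k+2) : ℝ) =
      a ^ 2 * (a ^ k / (Nat.factorial k : ℝ)) := by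
  rw [show k + 2 = (k + 1) + 1 from rfl, Nat.factorial_succ, Nat.factorial_succ]
  push_cast
  have h1 : ((k : ℝ) + 1) ≠ 0 := by positivity
  have h2 : ((k : ℝ) + 1 + 1) ≠ 0 := by positivity
  field_simp
  ring

lemma cher_s2 (a : ℝ) : Summable (fun k : ℕ => (k : ℝ) * ((k : ℝ) - 1) * a ^ k / (Nat.factorial k : ℝ)) := by
  rw [← summable_nat_add_iff 2]
  simpa only [cher_g2_succ] using (cher_s0 a).mul_left (a ^ 2)

lemma cher_t2 (a : ℝ) :
    ∑' k : ℕ, (k : ℝ) * ((k : ℝ) - 1) * a ^ k / (Nat.factorial k : ℝ) = a ^ 2 * Real.exp a := by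
  rw [Summable.tsum_eq_zero_add (cher_s2 a)]
  rw [Summable.tsum_eq_zero_add (by rw [← summable_nat_add_iff 1]; exact (summable_nat_add_iff 2).mpr (cher_s2 a))]
  simp only [Nat.cast_zero, Nat.cast_one]
  norm_num
  have h : ∀ b : ℕ, ((b:ℝ) + 1 + 1) * ((b:ℝ) + 1) * a ^ (b + 1 + 1) / ((b + 1 + 1).factorial : ℝ)
      = a ^ 2 * (a ^ b / (b.factorial : ℝ)) := by
    intro b
    rw [show b + 1 + 1 = b + 2 from rfl, Nat.factorial_succ, Nat.factorial_succ]
    push_cast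
    have h1 : ((b : ℝ) + 1) ≠ 0 := by positivity
    have h2 : ((b : ℝ) + 1 + 1) ≠ 0 := by positivity
    field_simp
    ring
  rw [tsum_congr h, tsum_mul_left, cher_t0]

lemma cher_var_eq (a : ℝ) : (fun k : ℕ => ((k : ℝ) - a) ^ 2 * (a ^ k / (k.factorial : ℝ)))
    = fun k : ℕ => ((k : ℝ) * ((k : ℝ) - 1) * a ^ k / (k.factorial : ℝ))
      + ((1 - 2 * a) * ((k : ℝ) * a ^ k / (k.factorial : ℝ))
        + a ^ 2 * (a ^ k / (k.factorial : ℝ))) := by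
  funext k; ring

lemma cher_svar (a : ℝ) :
    Summable (fun k : ℕ => ((k : ℝ) - a) ^ 2 * (a ^ k / (k.factorial : ℝ))) := by
  rw [cher_var_eq]
  exact (cher_s2 a).add (((cher_s1 a).mul_left _).add ((cher_s0 a).mul_left _))

lemma cher_tvar (a : ℝ) :
    ∑' k : ℕ, ((k : ℝ) - a) ^ 2 * (a ^ k / (k.factorial : ℝ)) = a * Real.exp a := by
  rw [cher_var_eq,
    Summable.tsum_add (cher_s2 a) (((cher_s1 a).mul_left _).add ((cher_s0 a).mul_left _)),
    Summable.tsum_add ((cher_s1 a).mul_left _) ((cher_s0 a).mul_left _),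
    tsum_mul_left, tsum_mul_left, cher_t2, cher_t0]
  have h1 : ∑' k : ℕ, (k : ℝ) * a ^ k / (k.factorial : ℝ) = a * Real.exp a := cher_t1 a
  rw [h1]; ring

lemma cher_sabs (a : ℝ) (ha : 0 ≤ a) :
    Summable (fun k : ℕ => |(k : ℝ) - a| * (a ^ k / (k.factorial : ℝ))) := by
  have hsum : Summable (fun k : ℕ => ((k : ℝ) + a) * (a ^ k / (k.factorial : ℝ))) := by
    have h : (fun k : ℕ => ((k : ℝ) + a) * (a ^ k / (k.factorial : ℝ)))
        = fun k : ℕ => ((k : ℝ) * a ^ k / (k.factorial : ℝ)) + a * (a ^ k / (k.factorial : ℝ)) := by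
      funext k; ring
    rw [h]; exact (cher_s1 a).add ((cher_s0 a).mul_left a)
  refine Summable.of_nonneg_of_le (fun k => by positivity) (fun k => ?_) hsum
  have h1 : |(k : ℝ) - a| ≤ (k : ℝ) + a := by
    rcases abs_cases ((k : ℝ) - a) with ⟨h, _⟩ | ⟨h, _⟩ <;>
      [linarith; linarith [Nat.cast_nonneg (α := ℝ) k]]
  exact mul_le_mul_of_nonneg_right h1 (by positivity)

lemma cher_keybound (a : ℝ) (ha : 0 ≤ a) :
    ∑' k : ℕ, |(k : ℝ) - a| * (a ^ k / (k.factorial : ℝ)) ≤ Real.sqrt a * Real.exp a := by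
  refine Summable.tsum_le_of_sum_le (cher_sabs a ha) fun s => ?_
  have hp : ∀ k : ℕ, (0:ℝ) ≤ a ^ k / (k.factorial : ℝ) := fun k => by positivity
  have cs := Finset.sum_sq_le_sum_mul_sum_of_sq_eq_mul s
    (r := fun k : ℕ => |(k : ℝ) - a| * (a ^ k / (k.factorial : ℝ)))
    (f := fun k : ℕ => a ^ k / (k.factorial : ℝ))
    (g := fun k : ℕ => ((k : ℝ) - a) ^ 2 * (a ^ k / (k.factorial : ℝ)))
    (fun i _ => hp i) (fun i _ => by positivity)
    (fun i _ => by rw [mul_pow, sq_abs]; ring)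
  have hf : ∑ k ∈ s, a ^ k / (k.factorial : ℝ) ≤ Real.exp a := by
    rw [← cher_t0 a]
    exact Summable.sum_le_tsum s (fun k _ => hp k) (cher_s0 a)
  have hg : ∑ k ∈ s, ((k : ℝ) - a) ^ 2 * (a ^ k / (k.factorial : ℝ)) ≤ a * Real.exp a := by
    rw [← cher_tvar a]
    exact Summable.sum_le_tsum s (fun k _ => by positivity) (cher_svar a)
  have hsq : (∑ k ∈ s, |(k : ℝ) - a| * (a ^ k / (k.factorial : ℝ))) ^ 2
      ≤ (Real.sqrt a * Real.exp a) ^ 2 := by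
    calc _ ≤ (∑ k ∈ s, a ^ k / (k.factorial : ℝ))
        * ∑ k ∈ s, ((k : ℝ) - a) ^ 2 * (a ^ k / (k.factorial : ℝ)) := cs
      _ ≤ Real.exp a * (a * Real.exp a) := by
          apply mul_le_mul hf hg (Finset.sum_nonneg fun k _ => by positivity)
            (Real.exp_pos a).le
      _ = (Real.sqrt a * Real.exp a) ^ 2 := by
          rw [mul_pow, Real.sq_sqrt ha]; ring
  have hnn : (0:ℝ) ≤ ∑ k ∈ s, |(k : ℝ) - a| * (a ^ k / (k.factorial : ℝ)) :=
    Finset.sum_nonneg fun k _ => by positivity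
  calc ∑ k ∈ s, |(k : ℝ) - a| * (a ^ k / (k.factorial : ℝ))
      = Real.sqrt ((∑ k ∈ s, |(k : ℝ) - a| * (a ^ k / (k.factorial : ℝ))) ^ 2) :=
        (Real.sqrt_sq hnn).symm
    _ ≤ Real.sqrt ((Real.sqrt a * Real.exp a) ^ 2) := Real.sqrt_le_sqrt hsq
    _ = Real.sqrt a * Real.exp a := Real.sqrt_sq (by positivity)

section op
variable {B : Type*} [NormedAddCommGroup B] [NormedSpace ℝ B]

lemma cher_pow_apply_le (S : B →L[ℝ] B) (hS : ‖S‖ ≤ 1) (k : ℕ) :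
    ∀ y : B, ‖(S ^ k) y‖ ≤ ‖y‖ := by
  induction k with
  | zero => intro y; simp
  | succ k ih =>
    intro y
    rw [pow_succ]
    calc ‖(S ^ k * S) y‖ = ‖(S ^ k) (S y)‖ := rfl
      _ ≤ ‖S y‖ := ih _
      _ ≤ ‖S‖ * ‖y‖ := S.le_opNorm y
      _ ≤ 1 * ‖y‖ := mul_le_mul_of_nonneg_right hS (norm_nonneg y)
      _ = ‖y‖ := one_mul _

lemma cher_pow_diff (S : B →L[ℝ] B) (hS : ‖S‖ ≤ 1) (x : B) (m : ℕ) :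
    ∀ d : ℕ, ‖(S ^ (m + d)) x - (S ^ m) x‖ ≤ d * ‖S x - x‖ := by
  intro d
  induction d with
  | zero => simp
  | succ d ih =>
    have h1 : (S ^ (m + (d + 1))) x = (S ^ (m + d)) (S x) := by
      rw [show m + (d + 1) = (m + d) + 1 from rfl, pow_succ]; rfl
    calc ‖(S ^ (m + (d + 1))) x - (S ^ m) x‖
        = ‖(S ^ (m + d)) (S x - x) + ((S ^ (m + d)) x - (S ^ m) x)‖ := by
          rw [map_sub, h1]; congr 1; abel
      _ ≤ ‖(S ^ (m + d)) (S x - x)‖ + ‖(S ^ (m + d)) x - (S ^ m) x‖ := norm_add_le _ _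
      _ ≤ ‖S x - x‖ + d * ‖S x - x‖ := add_le_add (cher_pow_apply_le S hS _ _) ih
      _ = (d + 1 : ℕ) * ‖S x - x‖ := by push_cast; ring

lemma cher_diff (S : B →L[ℝ] B) (hS : ‖S‖ ≤ 1) (x : B) (n k : ℕ) :
    ‖(S ^ k) x - (S ^ n) x‖ ≤ |(k : ℝ) - (n : ℝ)| * ‖S x - x‖ := by
  rcases le_total n k with h | h
  · obtain ⟨d, rfl⟩ := Nat.exists_eq_add_of_le h
    have habs : |((n + d : ℕ) : ℝ) - (n : ℝ)| = (d : ℝ) := by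
      push_cast; rw [add_sub_cancel_left, abs_of_nonneg (Nat.cast_nonneg d)]
    rw [habs]
    exact cher_pow_diff S hS x n d
  · obtain ⟨d, rfl⟩ := Nat.exists_eq_add_of_le h
    have habs : |(k : ℝ) - ((k + d : ℕ) : ℝ)| = (d : ℝ) := by
      push_cast
      rw [show (k:ℝ) - ((k:ℝ) + (d:ℝ)) = -(d:ℝ) by ring, abs_neg,
        abs_of_nonneg (Nat.cast_nonneg d)]
    rw [norm_sub_rev, habs]
    exact cher_pow_diff S hS x k d

end op

set_option maxHeartbeats 1000000 in
set_option synthInstance.maxHeartbeats 200000 in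
/-- Chernoff's √n-lemma: for a linear contraction `S` on a Banach space `B`,
`‖e^{n(S-I)}x - Sⁿx‖ ≤ √n ‖Sx - x‖` for all `x` and `n`. -/
theorem chernoff_sqrt_lemma {B : Type*} [NormedAddCommGroup B] [NormedSpace ℝ B]
    [CompleteSpace B] (S : B →L[ℝ] B) (hS : ‖S‖ ≤ 1) (x : B) (n : ℕ) :
    ‖NormedSpace.exp ((n : ℝ) • (S - 1)) x - (S ^ n) x‖ ≤ Real.sqrt n * ‖S x - x‖ := by
  set a : ℝ := (n : ℝ) with ha_def
  have ha : 0 ≤ a := Nat.cast_nonneg n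
  -- Step 1: split the exponential
  have hsplit : NormedSpace.exp (a • (S - 1)) =
      Real.exp (-a) • NormedSpace.exp (a • S) := by
    have h1 : a • (S - 1) = (-a) • (1 : B →L[ℝ] B) + a • S := by
      rw [smul_sub]; module
    have hcomm : Commute ((-a) • (1 : B →L[ℝ] B)) (a • S) := by
      show _ * _ = _ * _
      ext v
      simp only [ContinuousLinearMap.mul_apply, ContinuousLinearMap.smul_apply,
        ContinuousLinearMap.one_apply, map_smul]
      rw [smul_comm]
    rw [h1, NormedSpace.exp_add_of_commute_of_mem_ball (𝕂 := ℝ) hcomm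
      ((NormedSpace.expSeries_radius_eq_top ℝ (B →L[ℝ] B)).symm ▸ edist_lt_top _ _)
      ((NormedSpace.expSeries_radius_eq_top ℝ (B →L[ℝ] B)).symm ▸ edist_lt_top _ _)]
    have h2 : (-a) • (1 : B →L[ℝ] B) = algebraMap ℝ (B →L[ℝ] B) (-a) := by
      rw [Algebra.algebraMap_eq_smul_one]
    rw [h2, ← NormedSpace.algebraMap_exp_comm, ← Real.exp_eq_exp_ℝ,
      Algebra.algebraMap_eq_smul_one, smul_mul_assoc, one_mul]
  -- Step 2: the exponential applied to x as a tsum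
  have happ : NormedSpace.exp (a • S) x = ∑' k : ℕ, (a ^ k / (k.factorial : ℝ)) • (S ^ k) x := by
    rw [NormedSpace.exp_eq_tsum ℝ]
    have hsum := NormedSpace.expSeries_summable' (𝕂 := ℝ) (a • S)
    have := ((ContinuousLinearMap.apply ℝ B x).map_tsum hsum)
    simp only [ContinuousLinearMap.apply_apply] at this
    rw [this]
    refine tsum_congr fun k => ?_
    rw [smul_pow, smul_smul, ContinuousLinearMap.smul_apply, div_eq_inv_mul]
  set c : ℕ → ℝ := fun k => Real.exp (-a) * (a ^ k / (k.factorial : ℝ)) with hc_def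
  have hc_nonneg : ∀ k, 0 ≤ c k := fun k => by positivity
  have hc_sum : Summable c := (cher_s0 a).mul_left _
  have hc_total : ∑' k, c k = 1 := by
    rw [hc_def, tsum_mul_left, cher_t0, ← Real.exp_add]
    norm_num
  -- rewrite LHS vector
  have hA : Summable (fun k => c k • (S ^ k) x) := by
    apply Summable.of_norm
    apply Summable.of_nonneg_of_le (fun k => norm_nonneg _)
      (fun k => ?_) (hc_sum.mul_right ‖x‖)
    rw [norm_smul, Real.norm_eq_abs, abs_of_nonneg (hc_nonneg k)]
    exact mul_le_mul_of_nonneg_left (cher_pow_apply_le S hS k x) (hc_nonneg k)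
  have hB : Summable (fun k => c k • (S ^ n) x) := hc_sum.smul_const _
  have hlhs : NormedSpace.exp (a • (S - 1)) x - (S ^ n) x
      = ∑' k, c k • ((S ^ k) x - (S ^ n) x) := by
    have e1 : NormedSpace.exp (a • (S - 1)) x
        = ∑' k, c k • (S ^ k) x := by
      rw [hsplit, ContinuousLinearMap.smul_apply, happ, ← tsum_const_smul'' (Real.exp (-a))]
      refine tsum_congr fun k => ?_
      rw [smul_smul]
    have e2 : (S ^ n) x = ∑' k, c k • (S ^ n) x := by
      rw [Summable.tsum_smul_const hc_sum, hc_total, one_smul]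
    rw [e1]
    conv_lhs => rw [e2]
    rw [← Summable.tsum_sub hA hB]
    exact tsum_congr fun k => (smul_sub _ _ _).symm
  rw [hlhs]
  -- norm estimates
  have hbound : ∀ k : ℕ, ‖c k • ((S ^ k) x - (S ^ n) x)‖
      ≤ c k * (|(k : ℝ) - a| * ‖S x - x‖) := by
    intro k
    rw [norm_smul, Real.norm_eq_abs, abs_of_nonneg (hc_nonneg k)]
    exact mul_le_mul_of_nonneg_left (cher_diff S hS x n k) (hc_nonneg k)
  have hsum2 : Summable (fun k => c k * (|(k : ℝ) - a| * ‖S x - x‖)) := by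
    have : (fun k => c k * (|(k : ℝ) - a| * ‖S x - x‖))
        = fun k : ℕ => Real.exp (-a) * (|(k : ℝ) - a| * (a ^ k / (k.factorial : ℝ))) * ‖S x - x‖ := by
      funext k; simp only [hc_def]; ring
    rw [this]
    exact (((cher_sabs a ha).mul_left _).mul_right _)
  have hsum1 : Summable (fun k => ‖c k • ((S ^ k) x - (S ^ n) x)‖) :=
    Summable.of_nonneg_of_le (fun k => norm_nonneg _) hbound hsum2
  calc ‖∑' k, c k • ((S ^ k) x - (S ^ n) x)‖
      ≤ ∑' k, ‖c k • ((S ^ k) x - (S ^ n) x)‖ := norm_tsum_le_tsum_norm hsum1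
    _ ≤ ∑' k, c k * (|(k : ℝ) - a| * ‖S x - x‖) := Summable.tsum_le_tsum hbound hsum1 hsum2
    _ = Real.exp (-a) * (∑' k : ℕ, |(k : ℝ) - a| * (a ^ k / (k.factorial : ℝ))) * ‖S x - x‖ := by
        have hck : ∀ k : ℕ, c k * (|(k : ℝ) - a| * ‖S x - x‖)
            = (Real.exp (-a) * ‖S x - x‖) * (|(k : ℝ) - a| * (a ^ k / (k.factorial : ℝ))) := by
          intro k; simp only [hc_def]; ring
        rw [tsum_congr hck, tsum_mul_left]
        ring
    _ ≤ Real.exp (-a) * (Real.sqrt a * Real.exp a) * ‖S x - x‖ := by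
        apply mul_le_mul_of_nonneg_right _ (norm_nonneg _)
        exact mul_le_mul_of_nonneg_left (cher_keybound a ha) (Real.exp_pos _).le
    _ = Real.sqrt a * ‖S x - x‖ := by
        rw [show Real.exp (-a) * (Real.sqrt a * Real.exp a) = Real.sqrt a * (Real.exp (-a) * Real.exp a) by ring,
          ← Real.exp_add]
        norm_num
end

section
/- Let u₁, u₂ be unitary operators on a Hilbert space H with u = u₁u₂, let x be a bounded operator generating the uniformly continuous contraction semigroup e^{tx}, and set V_t = u₁ e^{(t/2)x} u₁* · u e^{(t/2)x} u*, Πy = u y u*. Assume the Cesàro means of Πᵏ(·) converge on the relevant elements, with limit projection P onto the commutant of u. Then the strong derivative of P(V_t) at t = 0 equals A = (1/2) P(u₁ x u₁* + u x u*), and (u₁ e^{(t/n)x} u₂ e^{(t/n)x})^{n/2} (u*)^{n/2} → e^{tA} strongly as n → ∞ (along even n). -/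
set_option linter.unusedSectionVars false
set_option maxHeartbeats 2000000

open Filter Topology ContinuousLinearMap Finset
open NormedSpace (exp)

variable {H : Type*} [NormedAddCommGroup H] [InnerProductSpace ℂ H] [CompleteSpace H]

/-- Conjugation `y ↦ w y w*` on `B(H)`. -/
noncomputable def conjBy (w : H →L[ℂ] H) (y : H →L[ℂ] H) : H →L[ℂ] H :=
  w ∘L y ∘L adjoint w

section UIPFAux
variable {H : Type*} [NormedAddCommGroup H] [InnerProductSpace ℂ H] [CompleteSpace H]


section ExpEst
variable {A : Type*} [NormedRing A] [NormedAlgebra ℂ A] [CompleteSpace A]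

lemma uipf_exp_shift_hasSum (z : A) (k : ℕ) :
    HasSum (fun n => (((n + k).factorial : ℂ)⁻¹ • z ^ (n + k)))
      (exp z - ∑ i ∈ Finset.range k, ((i.factorial : ℂ)⁻¹ • z ^ i)) := by
  have h := NormedSpace.exp_series_hasSum_exp' (𝕂 := ℂ) z
  refine (hasSum_nat_add_iff (f := fun n => ((n.factorial : ℂ))⁻¹ • z ^ n) k).mpr ?_
  simpa using h

lemma uipf_norm_exp_shift_le (hone : ‖(1:A)‖ ≤ 1) (z : A) (k : ℕ) :
    ‖exp z - ∑ i ∈ Finset.range k, ((i.factorial : ℂ)⁻¹ • z ^ i)‖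
      ≤ ‖z‖ ^ k * Real.exp ‖z‖ := by
  have hpow : ∀ j : ℕ, ‖z ^ j‖ ≤ ‖z‖ ^ j := by
    intro j
    rcases Nat.eq_zero_or_pos j with hj | hj
    · subst hj; simpa using hone
    · exact norm_pow_le' z hj
  have hg : HasSum (fun n : ℕ => ‖z‖ ^ k * (‖z‖ ^ n / n.factorial)) (‖z‖ ^ k * Real.exp ‖z‖) := by
    have h := NormedSpace.expSeries_div_hasSum_exp (𝔸 := ℝ) ‖z‖
    rw [← Real.exp_eq_exp_ℝ] at h
    exact h.mul_left _
  refine (uipf_exp_shift_hasSum z k).norm_le_of_bounded hg ?_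
  intro n
  rw [norm_smul, norm_inv]
  have h1 : ‖(((n + k).factorial : ℕ) : ℂ)‖ = (((n + k).factorial : ℕ) : ℝ) := by
    simp
  rw [h1]
  have h3 : (0:ℝ) < (n.factorial : ℝ) := by positivity
  have h5 : (n.factorial : ℝ) ≤ ((n + k).factorial : ℝ) := by
    exact_mod_cast Nat.factorial_le (Nat.le_add_right n k)
  calc (((n + k).factorial : ℕ) : ℝ)⁻¹ * ‖z ^ (n + k)‖
      ≤ (((n + k).factorial : ℕ) : ℝ)⁻¹ * ‖z‖ ^ (n + k) := by
        gcongr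
        exact hpow _
    _ ≤ (n.factorial : ℝ)⁻¹ * ‖z‖ ^ (n + k) := by
        gcongr
    _ = ‖z‖ ^ k * (‖z‖ ^ n / n.factorial) := by
        rw [pow_add]
        ring

lemma uipf_norm_exp_le (hone : ‖(1:A)‖ ≤ 1) (z : A) : ‖exp z‖ ≤ Real.exp ‖z‖ := by
  have h := uipf_norm_exp_shift_le hone z 0
  simpa using h

lemma uipf_norm_exp_sub_one_le (hone : ‖(1:A)‖ ≤ 1) (z : A) :
    ‖exp z - 1‖ ≤ ‖z‖ * Real.exp ‖z‖ := by
  have h := uipf_norm_exp_shift_le hone z 1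
  simpa using h

lemma uipf_norm_exp_sub_one_sub_le (hone : ‖(1:A)‖ ≤ 1) (z : A) :
    ‖exp z - 1 - z‖ ≤ ‖z‖ ^ 2 * Real.exp ‖z‖ := by
  have h := uipf_norm_exp_shift_le hone z 2
  rw [Finset.sum_range_succ, Finset.sum_range_one] at h
  simpa [sub_sub] using h

end ExpEst



/-- ordered partial products `a 0 * a 1 * ⋯ * a (n-1)` -/
def uipfProd {R : Type*} [Monoid R] (a : ℕ → R) : ℕ → R
  | 0 => 1
  | n + 1 => uipfProd a n * a n

section RingId
variable {R : Type*} [Ring R]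

lemma uipf_tele (a : ℕ → R) (E : R) : ∀ m : ℕ,
    uipfProd a m - E ^ m = ∑ j ∈ range m, uipfProd a j * (a j - E) * E ^ (m - 1 - j) := by
  intro m
  induction m with
  | zero => simp [uipfProd]
  | succ m ih =>
    have hstep : ∀ j ∈ range m, uipfProd a j * (a j - E) * E ^ (m + 1 - 1 - j)
        = uipfProd a j * (a j - E) * E ^ (m - 1 - j) * E := by
      intro j hj
      rw [mem_range] at hj
      rw [mul_assoc _ _ E, ← pow_succ]
      congr 2
      omega
    rw [sum_range_succ, sum_congr rfl hstep, ← sum_mul, ← ih]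
    have h2 : m + 1 - 1 - m = 0 := by omega
    rw [h2, pow_zero, mul_one]
    show uipfProd a m * a m - E ^ (m+1) = _
    rw [pow_succ]
    noncomm_ring

lemma uipf_shift_sum (c : ℕ → R) (E : R) (m : ℕ) :
    ∑ j ∈ range (m + 1), c j * E ^ (m - j)
      = (∑ j ∈ range m, c j * E ^ (m - 1 - j)) * E + c m := by
  rw [sum_range_succ, Nat.sub_self, pow_zero, mul_one, sum_mul]
  congr 1
  refine sum_congr rfl fun j hj => ?_
  rw [mem_range] at hj
  rw [mul_assoc, ← pow_succ]
  congr 2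
  omega

lemma uipf_abel (L σ : ℕ → R) (E : R) (hσ : σ 0 = 0) : ∀ m : ℕ,
    ∑ j ∈ range m, L j * (σ (j+1) - σ j) * E ^ (m - 1 - j)
      = L m * σ m + ∑ j ∈ range m,
          ((L j - L (j+1)) * σ (j+1) - L j * σ j * (1 - E)) * E ^ (m - 1 - j) := by
  intro m
  induction m with
  | zero => simp [hσ]
  | succ m ih =>
    have e1 : ∀ j, m + 1 - 1 - j = m - j := by omega
    simp only [e1]
    rw [uipf_shift_sum (fun j => L j * (σ (j+1) - σ j)) E m,
        uipf_shift_sum (fun j => (L j - L (j+1)) * σ (j+1) - L j * σ j * (1 - E)) E m]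
    rw [ih]
    noncomm_ring

end RingId

section MonoidId
variable {R : Type*} [Monoid R]

lemma uipf_pow_cancel {u u' : R} (hu'u : u' * u = 1) : ∀ m : ℕ, u' ^ m * u ^ m = 1 := by
  intro m
  induction m with
  | zero => simp
  | succ m ih =>
    rw [pow_succ u', pow_succ' u, mul_assoc, ← mul_assoc u' u, hu'u, one_mul, ih]

lemma uipf_pow_conj_prod {u u' : R} (huu' : u * u' = 1) (hu'u : u' * u = 1) (V : R) :
    ∀ m : ℕ, (V * u) ^ m * u' ^ m = uipfProd (fun k => u ^ k * V * u' ^ k) m := by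
  intro m
  induction m with
  | zero => simp [uipfProd]
  | succ m ih =>
    rw [uipfProd, ← ih]
    calc (V * u) ^ (m+1) * u' ^ (m+1)
        = (V * u) ^ m * ((V * (u * u')) * u' ^ m) := by
          rw [pow_succ, pow_succ' u', mul_assoc, mul_assoc, ← mul_assoc u u', mul_assoc V]
      _ = (V * u) ^ m * (V * u' ^ m) := by rw [huu', mul_one]
      _ = (V * u) ^ m * ((u' ^ m * u ^ m) * (V * u' ^ m)) := by
          rw [uipf_pow_cancel hu'u, one_mul]
      _ = (V * u) ^ m * u' ^ m * (u ^ m * V * u' ^ m) := by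
          simp only [mul_assoc]

end MonoidId





lemma uipf_norm_one_le : ‖(1 : H →L[ℂ] H)‖ ≤ 1 := norm_id_le

lemma uipf_norm_le_one {w : H →L[ℂ] H} (h' : adjoint w ∘L w = 1) : ‖w‖ ≤ 1 := by
  have h2 := norm_adjoint_comp_self w
  rw [h'] at h2
  have h3 : ‖(1 : H →L[ℂ] H)‖ ≤ 1 := norm_id_le
  nlinarith [norm_nonneg w]

lemma uipf_norm_adj_le_one {w : H →L[ℂ] H} (h : w ∘L adjoint w = 1) : ‖adjoint w‖ ≤ 1 :=
  uipf_norm_le_one (by rw [adjoint_adjoint]; exact h)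

lemma uipf_conjBy_norm_le {w : H →L[ℂ] H} (h : w ∘L adjoint w = 1) (h' : adjoint w ∘L w = 1)
    (y : H →L[ℂ] H) : ‖conjBy w y‖ ≤ ‖y‖ := by
  have h1 : ‖w‖ ≤ 1 := uipf_norm_le_one h'
  have h2 : ‖adjoint w‖ ≤ 1 := uipf_norm_adj_le_one h
  have h3 : ‖conjBy w y‖ ≤ ‖w‖ * (‖y‖ * ‖adjoint w‖) :=
    le_trans (opNorm_comp_le _ _)
      (mul_le_mul_of_nonneg_left (opNorm_comp_le _ _) (norm_nonneg w))
  refine h3.trans ?_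
  calc ‖w‖ * (‖y‖ * ‖adjoint w‖) ≤ 1 * (‖y‖ * 1) := by gcongr
    _ = ‖y‖ := by ring

lemma uipf_conjBy_mul_eq (w y : H →L[ℂ] H) : conjBy w y = w * y * adjoint w := by
  rw [mul_assoc]; rfl

lemma uipf_conjBy_one {w : H →L[ℂ] H} (h : w ∘L adjoint w = 1) : conjBy w (1 : H →L[ℂ] H) = 1 := by
  rw [uipf_conjBy_mul_eq, mul_one]
  exact h

lemma uipf_conjBy_sub (w y z : H →L[ℂ] H) : conjBy w (y - z) = conjBy w y - conjBy w z := by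
  simp only [uipf_conjBy_mul_eq, sub_mul, mul_sub]

lemma uipf_conjBy_add (w y z : H →L[ℂ] H) : conjBy w (y + z) = conjBy w y + conjBy w z := by
  simp only [uipf_conjBy_mul_eq, add_mul, mul_add]

lemma uipf_conjBy_smul (w : H →L[ℂ] H) (c : ℂ) (y : H →L[ℂ] H) :
    conjBy w (c • y) = c • conjBy w y := by
  simp only [uipf_conjBy_mul_eq, smul_mul_assoc, mul_smul_comm]

lemma uipf_iter_eq (w : H →L[ℂ] H) (y : H →L[ℂ] H) : ∀ k : ℕ,
    (conjBy w)^[k] y = w ^ k * y * (adjoint w) ^ k := by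
  intro k
  induction k with
  | zero => simp
  | succ k ih =>
    rw [Function.iterate_succ_apply', ih, uipf_conjBy_mul_eq, pow_succ' w, pow_succ (adjoint w)]
    simp only [mul_assoc]

lemma uipf_iter_norm_le {w : H →L[ℂ] H} (h : w ∘L adjoint w = 1) (h' : adjoint w ∘L w = 1)
    (y : H →L[ℂ] H) : ∀ k : ℕ, ‖(conjBy w)^[k] y‖ ≤ ‖y‖ := by
  intro k
  induction k with
  | zero => simp
  | succ k ih =>
    rw [Function.iterate_succ_apply']
    exact le_trans (uipf_conjBy_norm_le h h' _) ih

lemma uipf_pow_cancel' {R : Type*} [Monoid R] {u u' : R} (hu'u : u' * u = 1) :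
    ∀ m : ℕ, u' ^ m * u ^ m = 1 := by
  intro m
  induction m with
  | zero => simp
  | succ m ih =>
    rw [pow_succ u', pow_succ' u, mul_assoc, ← mul_assoc u' u, hu'u, one_mul, ih]

lemma uipf_iter_one {w : H →L[ℂ] H} (h : w ∘L adjoint w = 1) (k : ℕ) :
    (conjBy w)^[k] (1 : H →L[ℂ] H) = 1 := by
  rw [uipf_iter_eq, mul_one]
  exact uipf_pow_cancel' h k

lemma uipf_iter_sub (w : H →L[ℂ] H) (y z : H →L[ℂ] H) (k : ℕ) :
    (conjBy w)^[k] (y - z) = (conjBy w)^[k] y - (conjBy w)^[k] z := by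
  simp only [uipf_iter_eq, sub_mul, mul_sub]

lemma uipf_iter_smul (w : H →L[ℂ] H) (c : ℂ) (y : H →L[ℂ] H) (k : ℕ) :
    (conjBy w)^[k] (c • y) = c • (conjBy w)^[k] y := by
  simp only [uipf_iter_eq, smul_mul_assoc, mul_smul_comm]

lemma uipf_iter_add (w : H →L[ℂ] H) (y z : H →L[ℂ] H) (k : ℕ) :
    (conjBy w)^[k] (y + z) = (conjBy w)^[k] y + (conjBy w)^[k] z := by
  simp only [uipf_iter_eq, add_mul, mul_add]


end UIPFAux

/-- Example 2.10 of the paper. `u₁, u₂` unitary, `u = u₁u₂ ≠ I`, `x` bounded generating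
the contraction semigroup `e^{tx}`, `V_t = u₁e^{(t/2)x}u₁* · u e^{(t/2)x}u*`, `Πy = uyu*`,
and `P` the mean-ergodic (Cesàro) limit of the iterates of `Π` (projecting onto the
commutant of `u`). Then the derivative of `P(V_t)` at `t = 0` is
`A = ½P(u₁xu₁* + uxu*)`, and `(u₁e^{(t/n)x}u₂e^{(t/n)x})^{n/2}(u*)^{n/2} → e^{tA}`
strongly along even `n` (below `n = 2m`). -/
theorem unitary_interspersed_product_formula
    (u₁ u₂ : H →L[ℂ] H)
    (h₁ : u₁ ∘L adjoint u₁ = 1) (h₁' : adjoint u₁ ∘L u₁ = 1)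
    (h₂ : u₂ ∘L adjoint u₂ = 1) (h₂' : adjoint u₂ ∘L u₂ = 1)
    (hne : u₁ ∘L u₂ ≠ 1)
    (x : H →L[ℂ] H)
    (hcontr : ∀ s : ℝ, 0 ≤ s → ‖NormedSpace.exp ((s : ℂ) • x)‖ ≤ 1)
    (P : (H →L[ℂ] H) → (H →L[ℂ] H))
    (hP : ∀ y : H →L[ℂ] H,
      Tendsto (fun n : ℕ =>
          (n : ℂ)⁻¹ • ∑ k ∈ Finset.range n, (conjBy (u₁ ∘L u₂))^[k + 1] y)
        atTop (𝓝 (P y)))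
    (t : ℝ) (ht : 0 < t) :
    HasDerivAt (fun s : ℝ => P
        (conjBy u₁ (NormedSpace.exp (((s : ℂ) / 2) • x)) ∘L
          conjBy (u₁ ∘L u₂) (NormedSpace.exp (((s : ℂ) / 2) • x))))
      ((2 : ℂ)⁻¹ • P (conjBy u₁ x + conjBy (u₁ ∘L u₂) x)) 0 ∧
    ∀ f : H,
      Tendsto (fun m : ℕ =>
          ((((u₁ ∘L NormedSpace.exp (((t : ℂ) / (2 * m)) • x) ∘L
              u₂ ∘L NormedSpace.exp (((t : ℂ) / (2 * m)) • x)) ^ m) ∘L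
            ((adjoint (u₁ ∘L u₂)) ^ m)) f))
        atTop
        (𝓝 (NormedSpace.exp
          ((t : ℂ) • ((2 : ℂ)⁻¹ • P (conjBy u₁ x + conjBy (u₁ ∘L u₂) x))) f)) := by
  set u : H →L[ℂ] H := u₁ ∘L u₂ with hu_def
  have h₁m : u₁ * adjoint u₁ = 1 := h₁
  have h₁'m : adjoint u₁ * u₁ = 1 := h₁'
  have h₂m : u₂ * adjoint u₂ = 1 := h₂
  have h₂'m : adjoint u₂ * u₂ = 1 := h₂'
  have hadj : adjoint u = adjoint u₂ ∘L adjoint u₁ := adjoint_comp u₁ u₂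
  have hum : u = u₁ * u₂ := rfl
  have huadjm : adjoint u = adjoint u₂ * adjoint u₁ := hadj
  have hu : u ∘L adjoint u = 1 := by
    show u * adjoint u = 1
    rw [huadjm, hum]
    calc u₁ * u₂ * (adjoint u₂ * adjoint u₁)
        = u₁ * (u₂ * adjoint u₂) * adjoint u₁ := by simp only [mul_assoc]
      _ = 1 := by rw [h₂m, mul_one, h₁m]
  have hu' : adjoint u ∘L u = 1 := by
    show adjoint u * u = 1
    rw [huadjm, hum]
    calc adjoint u₂ * adjoint u₁ * (u₁ * u₂)
        = adjoint u₂ * (adjoint u₁ * u₁) * u₂ := by simp only [mul_assoc]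
      _ = 1 := by rw [h₁'m, mul_one, h₂'m]
  -- P is a bounded linear map
  have hIterNorm := uipf_iter_norm_le (w := u) hu hu'
  have hCnorm : ∀ (n : ℕ) (y : H →L[ℂ] H),
      ‖(n : ℂ)⁻¹ • ∑ k ∈ Finset.range n, (conjBy u)^[k + 1] y‖ ≤ ‖y‖ := by
    intro n y
    rw [norm_smul]
    have h2 : ‖((n:ℕ) : ℂ)⁻¹‖ = ((n:ℕ):ℝ)⁻¹ := by simp
    rw [h2]
    have h1 : ‖∑ k ∈ Finset.range n, (conjBy u)^[k+1] y‖ ≤ n * ‖y‖ := by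
      refine le_trans (norm_sum_le _ _) ?_
      calc ∑ k ∈ range n, ‖(conjBy u)^[k+1] y‖ ≤ ∑ _k ∈ range n, ‖y‖ :=
            Finset.sum_le_sum fun k _ => hIterNorm y (k+1)
        _ = n * ‖y‖ := by simp [mul_comm]
    rcases Nat.eq_zero_or_pos n with hn | hn
    · subst hn; simp
    · have hn' : (0:ℝ) < (n:ℝ) := by exact_mod_cast hn
      calc ((n:ℕ):ℝ)⁻¹ * ‖∑ k ∈ Finset.range n, (conjBy u)^[k+1] y‖
          ≤ ((n:ℕ):ℝ)⁻¹ * ((n:ℕ) * ‖y‖) := by gcongr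
        _ = ‖y‖ := by field_simp
  have hPadd : ∀ y z : H →L[ℂ] H, P (y + z) = P y + P z := by
    intro y z
    refine tendsto_nhds_unique (hP (y + z)) (((hP y).add (hP z)).congr fun n => ?_)
    simp only [← smul_add, ← Finset.sum_add_distrib, ← uipf_iter_add]
  have hPsmul : ∀ (c : ℂ) (y : H →L[ℂ] H), P (c • y) = c • P y := by
    intro c y
    refine tendsto_nhds_unique (hP (c • y)) (((hP y).const_smul c).congr fun n => ?_)
    rw [smul_comm, Finset.smul_sum]
    congr 1
    exact Finset.sum_congr rfl fun k _ => (uipf_iter_smul u c y (k+1)).symm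
  have hPnorm : ∀ y : H →L[ℂ] H, ‖P y‖ ≤ ‖y‖ := by
    intro y
    exact le_of_tendsto (hP y).norm (Eventually.of_forall fun n => hCnorm n y)
  let Plin : (H →L[ℂ] H) →ₗ[ℂ] (H →L[ℂ] H) :=
    { toFun := P, map_add' := hPadd, map_smul' := hPsmul }
  let Pcl : (H →L[ℂ] H) →L[ℂ] (H →L[ℂ] H) :=
    LinearMap.mkContinuous Plin 1 (fun y => by rw [one_mul]; exact hPnorm y)
  have hPcl : ∀ y, Pcl y = P y := fun y => rfl
  set B : H →L[ℂ] H := (2:ℂ)⁻¹ • (conjBy u₁ x + conjBy u x) with hB_def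
  have hPclB : Pcl B = (2:ℂ)⁻¹ • P (conjBy u₁ x + conjBy u x) := by
    rw [hB_def, map_smul, hPcl]
  constructor
  · -- Part 1 : derivative at 0
    have hf0 : HasDerivAt (fun s : ℝ => exp (((s:ℂ)/2) • x)) ((2:ℂ)⁻¹ • x) 0 := by
      have key := hasDerivAt_exp_smul_const (𝕂 := ℝ) (𝔸 := H →L[ℂ] H) ((2:ℂ)⁻¹ • x) (0:ℝ)
      have heq : (fun s : ℝ => exp (((s:ℂ)/2) • x))
          = fun s : ℝ => exp (s • ((2:ℂ)⁻¹ • x)) := by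
        funext s
        rw [← smul_assoc]
        norm_num [Complex.real_smul, div_eq_mul_inv]
      rw [heq]
      simpa using key
    have hg1 : HasDerivAt (fun s : ℝ => conjBy u₁ (exp (((s:ℂ)/2) • x)))
        (conjBy u₁ ((2:ℂ)⁻¹ • x)) 0 := by
      have h := (hf0.const_mul u₁).mul_const (adjoint u₁)
      simpa only [← uipf_conjBy_mul_eq] using h
    have hg2 : HasDerivAt (fun s : ℝ => conjBy u (exp (((s:ℂ)/2) • x)))
        (conjBy u ((2:ℂ)⁻¹ • x)) 0 := by
      have h := (hf0.const_mul u).mul_const (adjoint u)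
      simpa only [← uipf_conjBy_mul_eq] using h
    have hval : conjBy u₁ (exp ((((0:ℝ):ℂ)/2) • x)) = 1 ∧
        conjBy u (exp ((((0:ℝ):ℂ)/2) • x)) = 1 := by
      constructor <;>
      · rw [show ((((0:ℝ):ℂ))/2) • x = 0 by simp, NormedSpace.exp_zero]
        first
        | exact uipf_conjBy_one h₁
        | exact uipf_conjBy_one hu
    have hV : HasDerivAt (fun s : ℝ => conjBy u₁ (exp (((s:ℂ)/2) • x)) *
        conjBy u (exp (((s:ℂ)/2) • x))) B 0 := by
      have h := hg1.mul hg2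
      rw [hval.1, hval.2, mul_one, one_mul] at h
      have hBv : conjBy u₁ ((2:ℂ)⁻¹ • x) + conjBy u ((2:ℂ)⁻¹ • x) = B := by
        rw [hB_def, smul_add, uipf_conjBy_smul, uipf_conjBy_smul]
      rwa [hBv] at h
    have hD : HasDerivAt (fun s : ℝ => Pcl (conjBy u₁ (exp (((s:ℂ)/2) • x)) *
        conjBy u (exp (((s:ℂ)/2) • x)))) (Pcl B) 0 :=
      (Pcl.restrictScalars ℝ).hasFDerivAt.comp_hasDerivAt 0 hV
    rw [hPclB] at hD
    exact hD
  · -- Part 2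
    have hone : ‖(1 : H →L[ℂ] H)‖ ≤ 1 := norm_id_le
    set A : H →L[ℂ] H := (2:ℂ)⁻¹ • P (conjBy u₁ x + conjBy u x) with hA_def
    have hPB : P B = A := by rw [hB_def, hPsmul]
    -- ergodic sums
    set σ : ℕ → (H →L[ℂ] H) := fun j => (∑ k ∈ Finset.range j, (conjBy u)^[k] B) - (j:ℂ) • A
      with hσ_def
    set sg : ℕ → ℝ := fun j => ‖σ j‖ with hsg_def
    set δ : ℕ → ℝ := fun j => (j:ℝ)⁻¹ * sg j with hδ_def
    have hσ0 : σ 0 = 0 := by simp [hσ_def]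
    have hδ0 : Tendsto δ atTop (𝓝 0) := by
      have hshift : ∀ n : ℕ, ∑ k ∈ Finset.range n, (conjBy u)^[k] B
          = (∑ k ∈ Finset.range n, (conjBy u)^[k+1] B) + B - (conjBy u)^[n] B := by
        intro n
        have e1 := Finset.sum_range_succ (fun k => (conjBy u)^[k] B) n
        have e2 := Finset.sum_range_succ' (fun k => (conjBy u)^[k] B) n
        simp only [Function.iterate_zero_apply] at e2
        rw [← e2, e1, add_sub_cancel_right]
      have htail : Tendsto (fun n : ℕ => (n:ℂ)⁻¹ • (B - (conjBy u)^[n] B)) atTop (𝓝 0) := by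
        refine squeeze_zero_norm (fun n => ?_)
          (tendsto_const_div_atTop_nhds_zero_nat (2 * ‖B‖))
        rw [norm_smul]
        have h2 : ‖((n:ℕ) : ℂ)⁻¹‖ = ((n:ℕ):ℝ)⁻¹ := by simp
        rw [h2, div_eq_mul_inv, mul_comm (2 * ‖B‖)]
        gcongr
        calc ‖B - (conjBy u)^[n] B‖ ≤ ‖B‖ + ‖(conjBy u)^[n] B‖ := norm_sub_le _ _
          _ ≤ ‖B‖ + ‖B‖ := by gcongr; exact hIterNorm B n
          _ = 2 * ‖B‖ := by ring
      have hmean : Tendsto (fun n : ℕ => (n:ℂ)⁻¹ • ∑ k ∈ Finset.range n, (conjBy u)^[k] B)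
          atTop (𝓝 A) := by
        have h := (hP B).add htail
        rw [hPB, add_zero] at h
        refine h.congr fun n => ?_
        rw [hshift n, add_sub_assoc, smul_add]
      have hmean' : Tendsto (fun n : ℕ =>
          ‖((n:ℂ)⁻¹ • ∑ k ∈ Finset.range n, (conjBy u)^[k] B) - A‖) atTop (𝓝 0) := by
        rw [← tendsto_iff_norm_sub_tendsto_zero] at *
        exact hmean
      refine hmean'.congr' ?_
      filter_upwards [eventually_ge_atTop 1] with n hn
      have hn0 : ((n:ℕ):ℂ) ≠ 0 := Nat.cast_ne_zero.mpr (by omega)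
      have : ((n:ℂ)⁻¹ • ∑ k ∈ Finset.range n, (conjBy u)^[k] B) - A = (n:ℂ)⁻¹ • σ n := by
        rw [hσ_def]
        simp only [smul_sub, smul_smul]
        rw [inv_mul_cancel₀ hn0, one_smul]
      rw [this, norm_smul, hδ_def]
      simp
      exact Or.inl rfl
    have hsg_eq : ∀ j : ℕ, sg j = j * δ j := by
      intro j
      rcases Nat.eq_zero_or_pos j with hj | hj
      · subst hj; simp [hsg_def, hσ0]
      · have hj0 : ((j:ℕ):ℝ) ≠ 0 := by positivity
        rw [hδ_def]
        field_simp
    have hsg_nonneg : ∀ j, 0 ≤ sg j := fun j => norm_nonneg _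
    have hδ_nonneg : ∀ j, 0 ≤ δ j := fun j => by
      rw [hδ_def]; positivity
    have hsum2 : Tendsto (fun m : ℕ => ((m:ℝ)⁻¹)^2 * ∑ j ∈ Finset.range (m+1), sg j)
        atTop (𝓝 0) := by
      have hces : Tendsto (fun n : ℕ => (n:ℝ)⁻¹ * ∑ j ∈ Finset.range n, δ j) atTop (𝓝 0) :=
        hδ0.cesaro
      have hces' : Tendsto (fun m : ℕ => (((m+1:ℕ)):ℝ)⁻¹ * ∑ j ∈ Finset.range (m+1), δ j)
          atTop (𝓝 0) := hces.comp (tendsto_add_atTop_nat 1)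
      have hces2 : Tendsto (fun m : ℕ => 2 * ((((m+1:ℕ)):ℝ)⁻¹ * ∑ j ∈ Finset.range (m+1), δ j))
          atTop (𝓝 0) := by
        simpa using hces'.const_mul 2
      refine squeeze_zero' ?_ ?_ hces2
      · filter_upwards with m
        have : 0 ≤ ∑ j ∈ Finset.range (m+1), sg j :=
          Finset.sum_nonneg fun j _ => hsg_nonneg j
        positivity
      · filter_upwards [eventually_ge_atTop 1] with m hm
        have hm0 : (0:ℝ) < (m:ℝ) := by exact_mod_cast hm
        have hstep1 : ∑ j ∈ Finset.range (m+1), sg j ≤ m * ∑ j ∈ Finset.range (m+1), δ j := by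
          rw [Finset.mul_sum]
          refine Finset.sum_le_sum fun j hj => ?_
          rw [Finset.mem_range] at hj
          rw [hsg_eq j]
          have hjm : (j:ℝ) ≤ (m:ℝ) := by exact_mod_cast Nat.lt_succ_iff.mp hj
          exact mul_le_mul_of_nonneg_right hjm (hδ_nonneg j)
        have hδsum_nonneg : 0 ≤ ∑ j ∈ Finset.range (m+1), δ j :=
          Finset.sum_nonneg fun j _ => hδ_nonneg j
        calc ((m:ℝ)⁻¹)^2 * ∑ j ∈ Finset.range (m+1), sg j
            ≤ ((m:ℝ)⁻¹)^2 * (m * ∑ j ∈ Finset.range (m+1), δ j) := by gcongr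
          _ = (m:ℝ)⁻¹ * ∑ j ∈ Finset.range (m+1), δ j := by
              field_simp
          _ ≤ 2 * ((((m+1:ℕ)):ℝ)⁻¹ * ∑ j ∈ Finset.range (m+1), δ j) := by
              have h1 : (((m+1:ℕ)):ℝ) = (m:ℝ)+1 := by push_cast; ring
              have h2 : (m:ℝ)⁻¹ ≤ 2 * (((m+1:ℕ)):ℝ)⁻¹ := by
                have hm1 : (1:ℝ) ≤ (m:ℝ) := by exact_mod_cast hm
                rw [h1, inv_eq_one_div, inv_eq_one_div, mul_one_div,
                  div_le_div_iff₀ hm0 (by positivity)]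
                nlinarith
              rw [← mul_assoc]
              exact mul_le_mul_of_nonneg_right h2 hδsum_nonneg
    -- constants
    set C : ℝ := Real.exp (t * ‖A‖) with hC_def
    have hC1 : (1:ℝ) ≤ C := by rw [hC_def]; exact Real.one_le_exp (by positivity)
    have hC0 : (0:ℝ) ≤ C := le_trans zero_le_one hC1
    set K3 : ℝ := 3 * ‖x‖^2 * Real.exp (2 * (t * ‖x‖)) with hK3_def
    set K4 : ℝ := ‖A‖^2 * C with hK4_def
    set K1 : ℝ := ‖B‖ + t * K3 with hK1_def
    set K2 : ℝ := ‖A‖ * C with hK2_def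
    have hK3_nonneg : 0 ≤ K3 := by rw [hK3_def]; positivity
    have hK4_nonneg : 0 ≤ K4 := mul_nonneg (by positivity) hC0
    have hK1_nonneg : 0 ≤ K1 := by
      rw [hK1_def]; have := norm_nonneg B; nlinarith [hK3_nonneg, ht.le]
    have hK2_nonneg : 0 ≤ K2 := mul_nonneg (norm_nonneg A) hC0
    have key : ∀ m : ℕ, 1 ≤ m →
        ‖((u₁ ∘L exp (((t:ℂ)/(2*(m:ℂ))) • x) ∘L u₂ ∘L exp (((t:ℂ)/(2*(m:ℂ))) • x)) ^ m)
            ∘L (adjoint u)^m - exp ((t:ℂ) • A)‖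
          ≤ t * δ m + t^2*(K1+K2)*C * (((m:ℝ)⁻¹)^2 * ∑ j ∈ Finset.range (m+1), sg j)
            + t^2*(K3+K4)*C * (m:ℝ)⁻¹ := by
      intro m hm
      have hm0 : (0:ℝ) < (m:ℝ) := by exact_mod_cast hm
      have hm1 : (1:ℝ) ≤ (m:ℝ) := by exact_mod_cast hm
      have hmc : ((m:ℕ):ℂ) ≠ 0 := Nat.cast_ne_zero.mpr (by omega)
      set c : ℂ := (t:ℂ) / (m:ℂ) with hc_def
      set r : ℝ := t / (m:ℝ) with hr_def
      have hr0 : 0 < r := by rw [hr_def]; positivity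
      have hrt : r ≤ t := by rw [hr_def]; exact div_le_self ht.le hm1
      have hcr : ‖c‖ = r := by
        rw [hc_def, hr_def]
        have hcast : ((t/(m:ℝ) : ℝ) : ℂ) = (t:ℂ)/(m:ℂ) := by push_cast; ring
        rw [← hcast, Complex.norm_real]
        exact abs_of_nonneg (by positivity)
      set w : H →L[ℂ] H := ((t:ℂ)/(2*(m:ℂ))) • x with hw_def
      set V : H →L[ℂ] H := conjBy u₁ (exp w) * conjBy u (exp w) with hV_def
      set E : H →L[ℂ] H := exp (c • A) with hE_def
      set a : ℕ → H →L[ℂ] H := fun k => (conjBy u)^[k] V with ha_def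
      have hwx : ‖exp w‖ ≤ 1 := by
        have hs : (0:ℝ) ≤ t/(2*(m:ℝ)) := by positivity
        have h := hcontr (t/(2*(m:ℝ))) hs
        have hcast : ((t/(2*(m:ℝ)) : ℝ) : ℂ) = (t:ℂ)/(2*(m:ℂ)) := by push_cast; ring
        rw [hcast] at h
        rw [hw_def]
        exact h
      have hwnorm : ‖w‖ ≤ r * ‖x‖ := by
        rw [hw_def, norm_smul]
        have h1 : ‖(t:ℂ)/(2*(m:ℂ))‖ = t/(2*(m:ℝ)) := by
          have hcast : ((t/(2*(m:ℝ)) : ℝ) : ℂ) = (t:ℂ)/(2*(m:ℂ)) := by push_cast; ring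
          rw [← hcast, Complex.norm_real]
          exact abs_of_nonneg (by positivity)
        rw [h1, hr_def]
        have h2 : t/(2*(m:ℝ)) ≤ t/(m:ℝ) := by
          apply div_le_div_of_nonneg_left ht.le hm0
          nlinarith
        exact mul_le_mul_of_nonneg_right h2 (norm_nonneg x)
      have hVle : ‖V‖ ≤ 1 := by
        rw [hV_def]
        calc ‖conjBy u₁ (exp w) * conjBy u (exp w)‖
            ≤ ‖conjBy u₁ (exp w)‖ * ‖conjBy u (exp w)‖ := norm_mul_le _ _
          _ ≤ 1 * 1 := by
              refine mul_le_mul ?_ ?_ (norm_nonneg _) zero_le_one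
              · exact le_trans (uipf_conjBy_norm_le h₁ h₁' _) hwx
              · exact le_trans (uipf_conjBy_norm_le hu hu' _) hwx
          _ = 1 := mul_one 1
      have ha_le : ∀ k, ‖a k‖ ≤ 1 := fun k => le_trans (hIterNorm V k) hVle
      have hpa_le : ∀ k, ‖uipfProd a k‖ ≤ 1 := by
        intro k
        induction k with
        | zero => exact hone
        | succ k ih =>
          calc ‖uipfProd a (k+1)‖ = ‖uipfProd a k * a k‖ := rfl
            _ ≤ ‖uipfProd a k‖ * ‖a k‖ := norm_mul_le _ _
            _ ≤ 1 * 1 := mul_le_mul ih (ha_le k) (norm_nonneg _) zero_le_one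
            _ = 1 := mul_one 1
      have hG : u₁ ∘L exp w ∘L u₂ ∘L exp w = V * u := by
        have hc1 : adjoint u₁ * (u * exp w) = u₂ * exp w := by
          rw [hum, mul_assoc u₁ u₂, ← mul_assoc (adjoint u₁), h₁'m, one_mul]
        have hc2 : adjoint u * u = 1 := hu'
        have hVm : V = u₁ * (exp w * (adjoint u₁ * (u * (exp w * adjoint u)))) := by
          rw [hV_def, uipf_conjBy_mul_eq, uipf_conjBy_mul_eq]
          simp only [mul_assoc]
        show u₁ * (exp w * (u₂ * exp w)) = V * u
        rw [hVm]
        simp only [mul_assoc]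
        rw [hc2, mul_one, hc1]
      have hQeq : ((u₁ ∘L exp w ∘L u₂ ∘L exp w) ^ m) ∘L (adjoint u)^m = uipfProd a m := by
        rw [hG]
        have ha' : a = fun k => u^k * V * (adjoint u)^k := by
          funext k
          rw [ha_def]
          exact uipf_iter_eq u V k
        rw [ha']
        exact uipf_pow_conj_prod (u := u) (u' := adjoint u) hu hu' V m
      have hEm : E ^ m = exp ((t:ℂ) • A) := by
        letI : NormedAlgebra ℚ (H →L[ℂ] H) := .restrictScalars ℚ ℂ (H →L[ℂ] H)
        rw [hE_def, ← NormedSpace.exp_nsmul]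
        congr 1
        rw [← Nat.cast_smul_eq_nsmul ℂ, smul_smul]
        congr 1
        rw [hc_def]
        field_simp
      have hE_le : ∀ k, k ≤ m → ‖E^k‖ ≤ C := by
        intro k hk
        have h1 : ‖E‖ ≤ Real.exp (r * ‖A‖) := by
          have h := uipf_norm_exp_le hone (c • A)
          rwa [norm_smul, hcr, ← hE_def] at h
        rcases Nat.eq_zero_or_pos k with h0 | h0
        · subst h0
          simpa using le_trans hone hC1
        · calc ‖E^k‖ ≤ ‖E‖^k := norm_pow_le' E h0
            _ ≤ (Real.exp (r*‖A‖))^k := pow_le_pow_left₀ (norm_nonneg _) h1 k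
            _ = Real.exp (k*(r*‖A‖)) := by rw [← Real.exp_nat_mul]
            _ ≤ C := by
                rw [hC_def]
                apply Real.exp_le_exp.mpr
                have hkr : (k:ℝ) * r ≤ t := by
                  calc (k:ℝ)*r ≤ (m:ℝ)*r :=
                        mul_le_mul_of_nonneg_right (by exact_mod_cast hk) hr0.le
                    _ = t := by rw [hr_def]; field_simp
                calc (k:ℝ)*(r*‖A‖) = ((k:ℝ)*r)*‖A‖ := by ring
                  _ ≤ t*‖A‖ := mul_le_mul_of_nonneg_right hkr (norm_nonneg _)
      have hcB : c • B = conjBy u₁ w + conjBy u w := by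
        rw [hB_def, hw_def, uipf_conjBy_smul, uipf_conjBy_smul, smul_smul, smul_add]
        have h5 : c * (2:ℂ)⁻¹ = (t:ℂ)/(2*(m:ℂ)) := by
          rw [hc_def]; ring
        rw [h5]
      have hεV : ‖V - 1 - c • B‖ ≤ r^2 * K3 := by
        have hsub1 : conjBy u₁ (exp w) - 1 = conjBy u₁ (exp w - 1) := by
          rw [uipf_conjBy_sub, uipf_conjBy_one h₁]
        have hsub2 : conjBy u (exp w) - 1 = conjBy u (exp w - 1) := by
          rw [uipf_conjBy_sub, uipf_conjBy_one hu]
        have he1' : conjBy u₁ (exp w - 1 - w)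
            = conjBy u₁ (exp w) - 1 - conjBy u₁ w := by
          rw [uipf_conjBy_sub, uipf_conjBy_sub, uipf_conjBy_one h₁]
        have he2' : conjBy u (exp w - 1 - w)
            = conjBy u (exp w) - 1 - conjBy u w := by
          rw [uipf_conjBy_sub, uipf_conjBy_sub, uipf_conjBy_one hu]
        have hid : V - 1 - c • B
            = (conjBy u₁ (exp w) - 1) * (conjBy u (exp w) - 1)
              + conjBy u₁ (exp w - 1 - w) + conjBy u (exp w - 1 - w) := by
          rw [hcB, he1', he2', hV_def]
          noncomm_ring
        rw [hid]
        have hρ0 : (0:ℝ) ≤ ‖w‖ := norm_nonneg w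
        have he1 : ‖conjBy u₁ (exp w) - 1‖ ≤ ‖w‖ * Real.exp ‖w‖ := by
          rw [hsub1]
          exact le_trans (uipf_conjBy_norm_le h₁ h₁' _) (uipf_norm_exp_sub_one_le hone w)
        have he2 : ‖conjBy u (exp w) - 1‖ ≤ ‖w‖ * Real.exp ‖w‖ := by
          rw [hsub2]
          exact le_trans (uipf_conjBy_norm_le hu hu' _) (uipf_norm_exp_sub_one_le hone w)
        have he3 : ‖conjBy u₁ (exp w - 1 - w)‖ ≤ ‖w‖^2 * Real.exp ‖w‖ :=
          le_trans (uipf_conjBy_norm_le h₁ h₁' _) (uipf_norm_exp_sub_one_sub_le hone w)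
        have he4 : ‖conjBy u (exp w - 1 - w)‖ ≤ ‖w‖^2 * Real.exp ‖w‖ :=
          le_trans (uipf_conjBy_norm_le hu hu' _) (uipf_norm_exp_sub_one_sub_le hone w)
        have hwt : ‖w‖ ≤ t * ‖x‖ := le_trans hwnorm
          (mul_le_mul_of_nonneg_right hrt (norm_nonneg x))
        have hexpw : Real.exp ‖w‖ ≤ Real.exp (t*‖x‖) := Real.exp_le_exp.mpr hwt
        have hρr : ‖w‖ * Real.exp ‖w‖ ≤ (r*‖x‖) * Real.exp (t*‖x‖) :=
          mul_le_mul hwnorm hexpw (Real.exp_pos _).le (by positivity)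
        have hρ2 : ‖w‖^2 * Real.exp ‖w‖ ≤ (r*‖x‖)^2 * Real.exp (t*‖x‖) :=
          mul_le_mul (pow_le_pow_left₀ hρ0 hwnorm 2) hexpw (Real.exp_pos _).le (by positivity)
        have hmulbound : ‖(conjBy u₁ (exp w) - 1) * (conjBy u (exp w) - 1)‖
            ≤ ((r*‖x‖) * Real.exp (t*‖x‖)) * ((r*‖x‖) * Real.exp (t*‖x‖)) :=
          le_trans (norm_mul_le _ _)
            (mul_le_mul (le_trans he1 hρr) (le_trans he2 hρr) (norm_nonneg _) (by positivity))
        calc ‖(conjBy u₁ (exp w) - 1) * (conjBy u (exp w) - 1)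
              + conjBy u₁ (exp w - 1 - w) + conjBy u (exp w - 1 - w)‖
            ≤ ‖(conjBy u₁ (exp w) - 1) * (conjBy u (exp w) - 1)
              + conjBy u₁ (exp w - 1 - w)‖ + ‖conjBy u (exp w - 1 - w)‖ := norm_add_le _ _
          _ ≤ ‖(conjBy u₁ (exp w) - 1) * (conjBy u (exp w) - 1)‖
              + ‖conjBy u₁ (exp w - 1 - w)‖ + ‖conjBy u (exp w - 1 - w)‖ := by
              have := norm_add_le ((conjBy u₁ (exp w) - 1) * (conjBy u (exp w) - 1))
                (conjBy u₁ (exp w - 1 - w))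
              linarith
          _ ≤ ((r*‖x‖) * Real.exp (t*‖x‖)) * ((r*‖x‖) * Real.exp (t*‖x‖))
              + (r*‖x‖)^2 * Real.exp (t*‖x‖) + (r*‖x‖)^2 * Real.exp (t*‖x‖) := by
              have g3 := le_trans he3 hρ2
              have g4 := le_trans he4 hρ2
              linarith [hmulbound]
          _ ≤ r^2 * K3 := by
              rw [hK3_def]
              have he2exp : Real.exp (2*(t*‖x‖)) = Real.exp (t*‖x‖)*Real.exp (t*‖x‖) := by
                rw [← Real.exp_add]; ring_nf
              have h1le : (1:ℝ) ≤ Real.exp (t*‖x‖) := Real.one_le_exp (by positivity)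
              have hee : Real.exp (t*‖x‖) ≤ Real.exp (t*‖x‖)*Real.exp (t*‖x‖) :=
                le_mul_of_one_le_left (Real.exp_pos _).le h1le
              have hrx2 : (0:ℝ) ≤ (r*‖x‖)^2 := sq_nonneg _
              rw [he2exp]
              have h6 : (r*‖x‖)^2 * Real.exp (t*‖x‖)
                  ≤ (r*‖x‖)^2 * (Real.exp (t*‖x‖)*Real.exp (t*‖x‖)) :=
                mul_le_mul_of_nonneg_left hee hrx2
              nlinarith [h6]
      have hεE : ‖E - 1 - c • A‖ ≤ r^2 * K4 := by
        have h := uipf_norm_exp_sub_one_sub_le hone (c • A)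
        rw [← hE_def, norm_smul, hcr] at h
        refine le_trans h ?_
        rw [hK4_def, hC_def]
        have h5 : Real.exp (r*‖A‖) ≤ Real.exp (t*‖A‖) :=
          Real.exp_le_exp.mpr (mul_le_mul_of_nonneg_right hrt (norm_nonneg _))
        calc (r*‖A‖)^2 * Real.exp (r*‖A‖) ≤ (r*‖A‖)^2 * Real.exp (t*‖A‖) := by
              exact mul_le_mul_of_nonneg_left h5 (sq_nonneg _)
          _ = r^2*(‖A‖^2*Real.exp (t*‖A‖)) := by ring
      have hV1 : ‖(1:H →L[ℂ] H) - V‖ ≤ r * K1 := by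
        rw [norm_sub_rev]
        have hid : V - 1 = c • B + (V - 1 - c • B) := by abel
        rw [hid]
        calc ‖c • B + (V - 1 - c • B)‖ ≤ ‖c • B‖ + ‖V - 1 - c • B‖ := norm_add_le _ _
          _ ≤ r*‖B‖ + r^2*K3 := by
              rw [norm_smul, hcr]
              exact add_le_add (le_refl _) hεV
          _ ≤ r*K1 := by
              rw [hK1_def]
              have h7 : r^2*K3 ≤ r*(t*K3) := by
                have h8 := mul_le_mul_of_nonneg_left
                  (mul_le_mul_of_nonneg_right hrt hK3_nonneg) hr0.le
                nlinarith [h8]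
              rw [mul_add]
              linarith
      have hE1 : ‖(1:H →L[ℂ] H) - E‖ ≤ r * K2 := by
        rw [norm_sub_rev]
        have h := uipf_norm_exp_sub_one_le hone (c • A)
        rw [← hE_def, norm_smul, hcr] at h
        refine le_trans h ?_
        rw [hK2_def, hC_def]
        have h5 : Real.exp (r*‖A‖) ≤ Real.exp (t*‖A‖) :=
          Real.exp_le_exp.mpr (mul_le_mul_of_nonneg_right hrt (norm_nonneg _))
        calc r*‖A‖*Real.exp (r*‖A‖) ≤ r*‖A‖*Real.exp (t*‖A‖) := by
              exact mul_le_mul_of_nonneg_left h5 (by positivity)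
          _ = r*(‖A‖*Real.exp (t*‖A‖)) := by ring
      have hσdiff : ∀ j : ℕ, σ (j+1) - σ j = (conjBy u)^[j] B - A := by
        intro j
        simp only [hσ_def]
        rw [Finset.sum_range_succ]
        have hcast : (((j+1:ℕ)):ℂ) • A = (j:ℂ) • A + A := by
          push_cast
          rw [add_smul, one_smul]
        rw [hcast]
        abel
      have hD : ∀ j : ℕ, ‖(a j - E) - c • (σ (j+1) - σ j)‖ ≤ r^2*(K3+K4) := by
        intro j
        rw [hσdiff j]
        have hsm : (conjBy u)^[j] (c • B) = c • (conjBy u)^[j] B := uipf_iter_smul u c B j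
        have hs1 : (conjBy u)^[j] (V - 1 - c • B)
            = (conjBy u)^[j] V - 1 - c • (conjBy u)^[j] B := by
          rw [uipf_iter_sub, uipf_iter_sub, uipf_iter_one hu, hsm]
        have hid : (a j - E) - c • ((conjBy u)^[j] B - A)
            = (conjBy u)^[j] (V - 1 - c • B) - (E - 1 - c • A) := by
          simp only [ha_def]
          rw [hs1]
          simp only [smul_sub]
          abel
        rw [hid]
        calc ‖(conjBy u)^[j] (V - 1 - c • B) - (E - 1 - c • A)‖
            ≤ ‖(conjBy u)^[j] (V - 1 - c • B)‖ + ‖E - 1 - c • A‖ := norm_sub_le _ _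
          _ ≤ r^2*K3 + r^2*K4 := add_le_add (le_trans (hIterNorm _ j) hεV) hεE
          _ = r^2*(K3+K4) := by ring
      have hpadiff : ∀ j : ℕ, ‖uipfProd a j - uipfProd a (j+1)‖ ≤ r * K1 := by
        intro j
        have hid : uipfProd a j - uipfProd a (j+1) = uipfProd a j * (1 - a j) := by
          show uipfProd a j - uipfProd a j * a j = _
          rw [mul_sub, mul_one]
        rw [hid]
        have h1aj : (1:H →L[ℂ] H) - a j = (conjBy u)^[j] ((1:H →L[ℂ] H) - V) := by
          rw [uipf_iter_sub, uipf_iter_one hu, ha_def]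
        calc ‖uipfProd a j * (1 - a j)‖ ≤ ‖uipfProd a j‖ * ‖(1:H →L[ℂ] H) - a j‖ :=
              norm_mul_le _ _
          _ ≤ 1 * (r*K1) := by
              refine mul_le_mul (hpa_le j) ?_ (norm_nonneg _) zero_le_one
              rw [h1aj]
              exact le_trans (hIterNorm _ j) hV1
          _ = r*K1 := one_mul _
      have htele := uipf_tele a E m
      have hsplit : uipfProd a m - E ^ m
          = c • (∑ j ∈ Finset.range m, uipfProd a j * (σ (j+1) - σ j) * E^(m-1-j))
            + ∑ j ∈ Finset.range m,
                uipfProd a j * ((a j - E) - c • (σ (j+1) - σ j)) * E^(m-1-j) := by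
        rw [htele, Finset.smul_sum, ← Finset.sum_add_distrib]
        refine Finset.sum_congr rfl fun j _ => ?_
        have hsp : a j - E = c • (σ (j+1) - σ j) + ((a j - E) - c • (σ (j+1) - σ j)) := by
          abel
        conv_lhs => rw [hsp]
        rw [mul_add, add_mul, mul_smul_comm, smul_mul_assoc]
      have habel := uipf_abel (fun j => uipfProd a j) σ E hσ0 m
      have hSsum_nonneg : (0:ℝ) ≤ ∑ j ∈ Finset.range (m+1), sg j :=
        Finset.sum_nonneg fun j _ => hsg_nonneg j
      have hS1 : ‖∑ j ∈ Finset.range m, uipfProd a j * (σ (j+1) - σ j) * E^(m-1-j)‖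
          ≤ sg m + r*(K1+K2)*C*(∑ j ∈ Finset.range (m+1), sg j) := by
        rw [habel]
        refine le_trans (norm_add_le _ _) ?_
        have h1 : ‖uipfProd a m * σ m‖ ≤ sg m := by
          calc ‖uipfProd a m * σ m‖ ≤ ‖uipfProd a m‖ * ‖σ m‖ := norm_mul_le _ _
            _ ≤ 1 * sg m := mul_le_mul (hpa_le m) (le_of_eq rfl) (norm_nonneg _) zero_le_one
            _ = sg m := one_mul _
        have h2 : ‖∑ j ∈ Finset.range m,
              ((uipfProd a j - uipfProd a (j+1)) * σ (j+1)
                - uipfProd a j * σ j * (1 - E)) * E^(m-1-j)‖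
            ≤ ∑ j ∈ Finset.range m, ((r*K1)*sg (j+1) + sg j*(r*K2))*C := by
          refine le_trans (norm_sum_le _ _) (Finset.sum_le_sum fun j hj => ?_)
          have hE' := hE_le (m-1-j) (by omega)
          calc ‖((uipfProd a j - uipfProd a (j+1)) * σ (j+1)
                  - uipfProd a j * σ j * (1 - E)) * E^(m-1-j)‖
              ≤ ‖(uipfProd a j - uipfProd a (j+1)) * σ (j+1)
                  - uipfProd a j * σ j * (1 - E)‖ * ‖E^(m-1-j)‖ := norm_mul_le _ _
            _ ≤ ((r*K1)*sg (j+1) + sg j*(r*K2)) * C := by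
                refine mul_le_mul ?_ hE' (norm_nonneg _) ?_
                · refine le_trans (norm_sub_le _ _) (add_le_add ?_ ?_)
                  · calc ‖(uipfProd a j - uipfProd a (j+1)) * σ (j+1)‖
                        ≤ ‖uipfProd a j - uipfProd a (j+1)‖ * ‖σ (j+1)‖ := norm_mul_le _ _
                      _ ≤ (r*K1) * sg (j+1) :=
                          mul_le_mul_of_nonneg_right (hpadiff j) (norm_nonneg _)
                  · calc ‖uipfProd a j * σ j * (1 - E)‖
                        ≤ ‖uipfProd a j * σ j‖ * ‖(1:H →L[ℂ] H) - E‖ := norm_mul_le _ _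
                      _ ≤ (1 * sg j) * (r*K2) := by
                          refine mul_le_mul ?_ hE1 (norm_nonneg _) (by positivity)
                          exact le_trans (norm_mul_le _ _)
                            (mul_le_mul_of_nonneg_right (hpa_le j) (norm_nonneg _))
                      _ = sg j * (r*K2) := by ring
                · have g1 : (0:ℝ) ≤ (r*K1)*sg (j+1) := by positivity
                  have g2 : (0:ℝ) ≤ sg j*(r*K2) := by positivity
                  linarith
        have h3 : ∑ j ∈ Finset.range m, ((r*K1)*sg (j+1) + sg j*(r*K2))*C
            ≤ r*(K1+K2)*C*(∑ j ∈ Finset.range (m+1), sg j) := by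
          have hs1 : ∑ j ∈ Finset.range m, sg (j+1) ≤ ∑ j ∈ Finset.range (m+1), sg j := by
            rw [Finset.sum_range_succ' sg m]
            exact le_add_of_nonneg_right (hsg_nonneg 0)
          have hs2 : ∑ j ∈ Finset.range m, sg j ≤ ∑ j ∈ Finset.range (m+1), sg j := by
            rw [Finset.sum_range_succ]
            exact le_add_of_nonneg_right (hsg_nonneg m)
          calc ∑ j ∈ Finset.range m, ((r*K1)*sg (j+1) + sg j*(r*K2))*C
              = (r*K1*C) * (∑ j ∈ Finset.range m, sg (j+1))
                + (r*K2*C)*(∑ j ∈ Finset.range m, sg j) := by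
                rw [Finset.mul_sum, Finset.mul_sum, ← Finset.sum_add_distrib]
                exact Finset.sum_congr rfl fun j _ => by ring
            _ ≤ (r*K1*C) * (∑ j ∈ Finset.range (m+1), sg j)
                + (r*K2*C)*(∑ j ∈ Finset.range (m+1), sg j) :=
                add_le_add (mul_le_mul_of_nonneg_left hs1 (by positivity))
                  (mul_le_mul_of_nonneg_left hs2 (by positivity))
            _ = r*(K1+K2)*C*(∑ j ∈ Finset.range (m+1), sg j) := by ring
        linarith
      have hS2 : ‖∑ j ∈ Finset.range m,
            uipfProd a j * ((a j - E) - c • (σ (j+1) - σ j)) * E^(m-1-j)‖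
          ≤ m * (r^2*(K3+K4)) * C := by
        refine le_trans (norm_sum_le _ _) ?_
        have hterm : ∀ j ∈ Finset.range m,
            ‖uipfProd a j * ((a j - E) - c • (σ (j+1) - σ j)) * E^(m-1-j)‖
              ≤ (r^2*(K3+K4)) * C := by
          intro j hj
          have hE' := hE_le (m-1-j) (by omega)
          calc ‖uipfProd a j * ((a j - E) - c • (σ (j+1) - σ j)) * E^(m-1-j)‖
              ≤ ‖uipfProd a j * ((a j - E) - c • (σ (j+1) - σ j))‖ * ‖E^(m-1-j)‖ :=
                norm_mul_le _ _
            _ ≤ (r^2*(K3+K4)) * C := by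
                refine mul_le_mul ?_ hE' (norm_nonneg _) (by positivity)
                calc ‖uipfProd a j * ((a j - E) - c • (σ (j+1) - σ j))‖
                    ≤ ‖uipfProd a j‖ * ‖(a j - E) - c • (σ (j+1) - σ j)‖ := norm_mul_le _ _
                  _ ≤ 1 * (r^2*(K3+K4)) :=
                      mul_le_mul (hpa_le j) (hD j) (norm_nonneg _) zero_le_one
                  _ = r^2*(K3+K4) := one_mul _
        calc ∑ j ∈ Finset.range m,
              ‖uipfProd a j * ((a j - E) - c • (σ (j+1) - σ j)) * E^(m-1-j)‖
            ≤ ∑ _j ∈ Finset.range m, (r^2*(K3+K4)) * C := Finset.sum_le_sum hterm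
          _ = m * (r^2*(K3+K4)) * C := by
              rw [Finset.sum_const, Finset.card_range, nsmul_eq_mul]
              ring
      calc ‖((u₁ ∘L exp w ∘L u₂ ∘L exp w) ^ m) ∘L (adjoint u)^m - exp ((t:ℂ) • A)‖
          = ‖uipfProd a m - E^m‖ := by rw [hQeq, hEm]
        _ = ‖c • (∑ j ∈ Finset.range m, uipfProd a j * (σ (j+1) - σ j) * E^(m-1-j))
            + ∑ j ∈ Finset.range m,
                uipfProd a j * ((a j - E) - c • (σ (j+1) - σ j)) * E^(m-1-j)‖ := by
            rw [hsplit]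
        _ ≤ r * (sg m + r*(K1+K2)*C*(∑ j ∈ Finset.range (m+1), sg j))
            + m * (r^2*(K3+K4)) * C := by
            refine le_trans (norm_add_le _ _) (add_le_add ?_ hS2)
            rw [norm_smul, hcr]
            exact mul_le_mul_of_nonneg_left hS1 hr0.le
        _ = t * δ m + t^2*(K1+K2)*C * (((m:ℝ)⁻¹)^2 * ∑ j ∈ Finset.range (m+1), sg j)
            + t^2*(K3+K4)*C * (m:ℝ)⁻¹ := by
            simp only [hδ_def, hr_def]
            field_simp
    -- assemble the limit
    have hQtendsto : Tendsto (fun m : ℕ =>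
        ‖((u₁ ∘L exp (((t:ℂ)/(2*(m:ℂ))) • x) ∘L u₂ ∘L exp (((t:ℂ)/(2*(m:ℂ))) • x)) ^ m)
            ∘L (adjoint u)^m - exp ((t:ℂ) • A)‖) atTop (𝓝 0) := by
      have hbound : Tendsto (fun m : ℕ => t * δ m
          + t^2*(K1+K2)*C * (((m:ℝ)⁻¹)^2 * ∑ j ∈ Finset.range (m+1), sg j)
          + t^2*(K3+K4)*C * (m:ℝ)⁻¹) atTop (𝓝 0) := by
        have h1 := hδ0.const_mul t
        have h2 := hsum2.const_mul (t^2*(K1+K2)*C)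
        have h3 := tendsto_inv_atTop_nhds_zero_nat.const_mul (t^2*(K3+K4)*C)
        have h4 := (h1.add h2).add h3
        simpa using h4
      refine squeeze_zero' (Eventually.of_forall fun m => norm_nonneg _) ?_ hbound
      filter_upwards [eventually_ge_atTop 1] with m hm
      exact key m hm
    intro f
    rw [tendsto_iff_norm_sub_tendsto_zero]
    refine squeeze_zero' (Eventually.of_forall fun m => norm_nonneg _) ?_
      (by simpa using hQtendsto.mul_const ‖f‖)
    filter_upwards with m
    calc ‖(((u₁ ∘L exp (((t:ℂ)/(2*(m:ℂ))) • x) ∘L u₂ ∘L exp (((t:ℂ)/(2*(m:ℂ))) • x)) ^ m)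
            ∘L (adjoint u)^m) f - (exp ((t:ℂ) • A)) f‖
        = ‖(((u₁ ∘L exp (((t:ℂ)/(2*(m:ℂ))) • x) ∘L u₂ ∘L exp (((t:ℂ)/(2*(m:ℂ))) • x)) ^ m)
            ∘L (adjoint u)^m - exp ((t:ℂ) • A)) f‖ := by
          rw [ContinuousLinearMap.sub_apply]
      _ ≤ ‖((u₁ ∘L exp (((t:ℂ)/(2*(m:ℂ))) • x) ∘L u₂ ∘L exp (((t:ℂ)/(2*(m:ℂ))) • x)) ^ m)
            ∘L (adjoint u)^m - exp ((t:ℂ) • A)‖ * ‖f‖ := le_opNorm _ f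
end
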